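/- Zero set of a nonzero real-analytic function is Lebesgue-null (instance used): if g : ℝⁿ → ℝ is real-analytic on a connected open set U and g is not identically zero on U, then {x ∈ U : g(x) = 0} has Lebesgue measure zero. -/

import Mathlib

open MeasureTheory Set Metric Filter Topology

/-- Countable subsets of `(0, ∞)` are null for the weighted radial measure. -/
lemma volumeIoiPow_null_of_countable {m : ℕ} {s : Set (Set.Ioi (0:ℝ))}
    (hs : s.Countable) : MeasureTheory.Measure.volumeIoiPow m s = 0 := by
  have h1 : ∀ x : Set.Ioi (0:ℝ), MeasureTheory.Measure.volumeIoiPow m {x} = 0 := by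
    intro x
    rw [MeasureTheory.Measure.volumeIoiPow,
      MeasureTheory.withDensity_apply _ (measurableSet_singleton x)]
    have h0 : ((volume : Measure ℝ).comap Subtype.val) ({x} : Set (Set.Ioi (0:ℝ))) = 0 := by
      rw [comap_subtype_coe_apply measurableSet_Ioi]
      simp
    exact MeasureTheory.setLIntegral_measure_zero _ _ h0
  calc MeasureTheory.Measure.volumeIoiPow m s
      = MeasureTheory.Measure.volumeIoiPow m (⋃ x ∈ s, {x}) := by
        rw [Set.biUnion_of_singleton]
    _ = 0 := by
        rw [MeasureTheory.measure_biUnion_null_iff hs]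
        exact fun x _ => h1 x

/-- The zero set of a 1-dimensional real-analytic function on an open preconnected
set is countable, provided the function is nonzero at some point of the set. -/
lemma countable_zeros_of_analyticOnNhd {f : ℝ → ℝ} {J : Set ℝ}
    (hJc : IsPreconnected J) (hf : AnalyticOnNhd ℝ f J) {t₀ : ℝ} (ht₀ : t₀ ∈ J)
    (hne : f t₀ ≠ 0) : {t ∈ J | f t = 0}.Countable := by
  set T := {t ∈ J | f t = 0} with hT
  have key : ∀ x ∈ T, ({x} : Set ℝ) ∈ 𝓝[T] x := by
    intro x hx
    rcases (hf x hx.1).eventually_eq_zero_or_eventually_ne_zero with h | h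
    · exact absurd (hf.eqOn_zero_of_preconnected_of_eventuallyEq_zero hJc hx.1 h ht₀) hne
    · rw [eventually_nhdsWithin_iff] at h
      rcases _root_.eventually_nhds_iff.1 h with ⟨V, hV, hVopen, hxV⟩
      rw [mem_nhdsWithin]
      refine ⟨V, hVopen, hxV, ?_⟩
      rintro y ⟨hyV, hyT⟩
      by_contra hy
      exact hV y hyV (by simpa using hy) hyT.2
  obtain ⟨t, hts, htc, hcov⟩ := TopologicalSpace.countable_cover_nhdsWithin key
  refine htc.mono ?_
  refine hcov.trans ?_
  simp [Set.biUnion_of_singleton]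

/-- the zero set of a real-analytic function, not identically
    zero on a connected open set U ⊆ ℝⁿ, has Lebesgue measure zero. -/
theorem stmt_16 (n : ℕ) (g : (Fin n → ℝ) → ℝ) (U : Set (Fin n → ℝ))
    (hU : IsOpen U) (hconn : IsConnected U)
    (hg : AnalyticOn ℝ g U)
    (hne : ∃ x ∈ U, g x ≠ 0) :
    MeasureTheory.volume {x ∈ U | g x = 0} = 0 := by
  classical
  have hg' : AnalyticOnNhd ℝ g U := (hU.analyticOn_iff_analyticOnNhd).1 hg
  set Z : Set (Fin n → ℝ) := {x ∈ U | g x = 0} with hZdef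
  -- measurability of Z
  have hVopen : IsOpen (U ∩ g ⁻¹' ({0}ᶜ : Set ℝ)) :=
    hg'.continuousOn.isOpen_inter_preimage hU isOpen_compl_singleton
  have hZm : MeasurableSet Z := by
    have : Z = U \ (U ∩ g ⁻¹' ({0}ᶜ : Set ℝ)) := by
      ext z
      simp only [hZdef, Set.mem_setOf_eq, Set.mem_diff, Set.mem_inter_iff, Set.mem_preimage,
        Set.mem_compl_iff, Set.mem_singleton_iff]
      tauto
    rw [this]
    exact hU.measurableSet.diff hVopen.measurableSet
  refine measure_null_of_locally_null Z fun x hx => ?_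
  -- find a ball around x inside U
  obtain ⟨ε, hε, hball⟩ := Metric.mem_nhds_iff.1 (hU.mem_nhds hx.1)
  set B : Set (Fin n → ℝ) := Metric.ball x ε with hBdef
  -- find w in B with g w ≠ 0
  have hw : ∃ w ∈ B, g w ≠ 0 := by
    by_contra h
    push_neg at h
    have hev : g =ᶠ[𝓝 x] 0 := by
      filter_upwards [Metric.ball_mem_nhds x hε] with z hz using h z hz
    obtain ⟨x₀, hx₀U, hx₀⟩ := hne
    exact hx₀ (hg'.eqOn_zero_of_preconnected_of_eventuallyEq_zero
      hconn.isPreconnected hx.1 hev hx₀U)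
  obtain ⟨w, hwB, hgw⟩ := hw
  refine ⟨Z ∩ B, inter_mem_nhdsWithin Z (Metric.ball_mem_nhds x hε), ?_⟩
  -- translate so that w goes to 0
  have hZBm : MeasurableSet (Z ∩ B) := hZm.inter measurableSet_ball
  set A : Set (Fin n → ℝ) := (fun z : Fin n → ℝ => w + z) ⁻¹' (Z ∩ B) with hAdef
  have hAm : MeasurableSet A := hZBm.preimage (measurable_const_add w)
  have hA0 : (0 : Fin n → ℝ) ∉ A := by
    intro h
    rw [hAdef] at h
    simp only [Set.mem_preimage, add_zero] at h
    exact hgw h.1.2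
  have hAsub : A ⊆ ({0}ᶜ : Set (Fin n → ℝ)) := fun z hz h0 => hA0 (by rwa [Set.mem_singleton_iff.mp h0] at hz)
  have hvolA : volume (Z ∩ B) = volume A := (measure_preimage_add volume w (Z ∩ B)).symm
  rw [hvolA]
  -- polar decomposition
  set h := homeomorphUnitSphereProd (Fin n → ℝ)
  set ν := (volume : Measure (Fin n → ℝ)).comap (Subtype.val : ({0}ᶜ : Set (Fin n → ℝ)) → (Fin n → ℝ)) with hνdef
  have h1 : volume A = ν (Subtype.val ⁻¹' A) := by
    rw [hνdef, comap_subtype_coe_apply (measurableSet_singleton (0 : Fin n → ℝ)).compl,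
      Subtype.image_preimage_coe]
    congr 1
    exact (Set.inter_eq_right.2 hAsub).symm
  set S : Set (Metric.sphere (0 : Fin n → ℝ) 1 × Set.Ioi (0:ℝ)) := h.symm ⁻¹' (Subtype.val ⁻¹' A)
    with hSdef
  have hSm : MeasurableSet S :=
    (hAm.preimage measurable_subtype_coe).preimage h.symm.measurable
  have hmp := (volume : Measure (Fin n → ℝ)).measurePreserving_homeomorphUnitSphereProd
  have h2 : ν (Subtype.val ⁻¹' A) =
      ((volume : Measure (Fin n → ℝ)).toSphere.prod
        (Measure.volumeIoiPow (Module.finrank ℝ (Fin n → ℝ) - 1))) S := by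
    rw [← hmp.measure_preimage hSm.nullMeasurableSet]
    congr 1
    rw [hSdef]
    ext z
    simp [h]
  rw [h1, h2, Measure.prod_apply hSm]
  -- each radial slice is countable, hence null
  have hslice : ∀ u : Metric.sphere (0 : Fin n → ℝ) 1,
      Measure.volumeIoiPow (Module.finrank ℝ (Fin n → ℝ) - 1) (Prod.mk u ⁻¹' S) = 0 := by
    intro u
    -- the line t ↦ w + t • u
    set J : Set ℝ := {t : ℝ | w + t • (u : Fin n → ℝ) ∈ B} with hJdef
    have hJconv : Convex ℝ J := by
      intro t1 h1 t2 h2 a b ha hb hab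
      have hmem := (convex_ball x ε) h1 h2 ha hb hab
      have hcomb : a • (w + t1 • (u : Fin n → ℝ)) + b • (w + t2 • (u : Fin n → ℝ))
          = (a + b) • w + (a * t1 + b * t2) • (u : Fin n → ℝ) := by module
      rw [hcomb, hab, one_smul] at hmem
      show w + (a • t1 + b • t2) • (u : Fin n → ℝ) ∈ B
      simpa [smul_eq_mul, hBdef] using hmem
    have h0J : (0 : ℝ) ∈ J := by simpa [hJdef] using hwB
    have hline : AnalyticOnNhd ℝ (fun t : ℝ => w + t • (u : Fin n → ℝ)) J := by
      have heq : (fun t : ℝ => w + t • (u : Fin n → ℝ))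
          = fun t : ℝ => w + ((ContinuousLinearMap.id ℝ ℝ).smulRight (u : Fin n → ℝ)) t := by
        ext t; simp
      rw [heq]
      exact analyticOnNhd_const.add
        (((ContinuousLinearMap.id ℝ ℝ).smulRight (u : Fin n → ℝ)).analyticOnNhd J)
    have hfan : AnalyticOnNhd ℝ (fun t : ℝ => g (w + t • (u : Fin n → ℝ))) J := by
      have := hg'.comp hline (fun t ht => hball ht)
      simpa [Function.comp_def] using this
    have hcnt : ({t ∈ J | g (w + t • (u : Fin n → ℝ)) = 0}).Countable :=
      countable_zeros_of_analyticOnNhd hJconv.isPreconnected hfan h0J (by simpa using hgw)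
    have hsub : (Prod.mk u ⁻¹' S) ⊆
        Subtype.val ⁻¹' {t ∈ J | g (w + t • (u : Fin n → ℝ)) = 0} := by
      rintro ⟨r, hr⟩ hmem
      have : (r : ℝ) • (u : Fin n → ℝ) ∈ A := by
        simpa [hSdef, h] using hmem
      rw [hAdef] at this
      exact ⟨this.2, this.1.2⟩
    have : (Prod.mk u ⁻¹' S).Countable :=
      (hcnt.preimage Subtype.val_injective).mono hsub
    exact volumeIoiPow_null_of_countable this
  simp only [hslice]
  simp
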